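/- Let X be a complex Hilbert space and let E₊, E₋ be bounded linear operators on X that are Fredholm of index 0 and satisfy E₊E₊* = E₋E₋*. Then E₊ is invertible (as a bounded operator with bounded inverse) if and only if E₋ is invertible. -/

import Mathlib

open ContinuousLinearMap

private lemma isUnit_aux
    {X : Type*} [NormedAddCommGroup X] [InnerProductSpace ℂ X] [CompleteSpace X]
    (Ep Em : X →L[ℂ] X)
    (hmk : FiniteDimensional ℂ (LinearMap.ker (Em : X →ₗ[ℂ] X)))
    (hm0 : Module.finrank ℂ (LinearMap.ker (Em : X →ₗ[ℂ] X)) =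
      Module.finrank ℂ (LinearMap.ker (ContinuousLinearMap.adjoint Em : X →ₗ[ℂ] X)))
    (h : Ep ∘L ContinuousLinearMap.adjoint Ep = Em ∘L ContinuousLinearMap.adjoint Em)
    (hu : IsUnit Ep) : IsUnit Em := by
  have hs : IsUnit (Em ∘L ContinuousLinearMap.adjoint Em) := by
    rw [← h, ← ContinuousLinearMap.star_eq_adjoint]
    exact hu.mul hu.star
  have hbij := ContinuousLinearMap.isUnit_iff_bijective.mp hs
  -- adjoint Em is injective
  have hker' : LinearMap.ker (ContinuousLinearMap.adjoint Em : X →ₗ[ℂ] X) = ⊥ := by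
    rw [LinearMap.ker_eq_bot]
    intro x y hxy
    apply hbij.1
    simp only [ContinuousLinearMap.coe_coe] at hxy
    simp only [ContinuousLinearMap.coe_comp', Function.comp_apply, hxy]
  have h0 : Module.finrank ℂ (LinearMap.ker (Em : X →ₗ[ℂ] X)) = 0 := by
    rw [hm0, hker']
    exact finrank_bot ℂ X
  have hker : LinearMap.ker (Em : X →ₗ[ℂ] X) = ⊥ := Submodule.finrank_eq_zero.mp h0
  rw [ContinuousLinearMap.isUnit_iff_bijective]
  constructor
  · exact LinearMap.ker_eq_bot.mp hker
  · intro y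
    obtain ⟨x, hx⟩ := hbij.2 y
    exact ⟨ContinuousLinearMap.adjoint Em x, hx⟩

theorem isUnit_iff_of_index_zero_of_mul_adjoint_eq
    {X : Type*} [NormedAddCommGroup X] [InnerProductSpace ℂ X] [CompleteSpace X]
    (Ep Em : X →L[ℂ] X)
    (hpk : FiniteDimensional ℂ (LinearMap.ker (Ep : X →ₗ[ℂ] X)))
    (hpk' : FiniteDimensional ℂ (LinearMap.ker (ContinuousLinearMap.adjoint Ep : X →ₗ[ℂ] X)))
    (hmk : FiniteDimensional ℂ (LinearMap.ker (Em : X →ₗ[ℂ] X)))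
    (hmk' : FiniteDimensional ℂ (LinearMap.ker (ContinuousLinearMap.adjoint Em : X →ₗ[ℂ] X)))
    (hp0 : Module.finrank ℂ (LinearMap.ker (Ep : X →ₗ[ℂ] X)) =
      Module.finrank ℂ (LinearMap.ker (ContinuousLinearMap.adjoint Ep : X →ₗ[ℂ] X)))
    (hm0 : Module.finrank ℂ (LinearMap.ker (Em : X →ₗ[ℂ] X)) =
      Module.finrank ℂ (LinearMap.ker (ContinuousLinearMap.adjoint Em : X →ₗ[ℂ] X)))
    (h : Ep ∘L ContinuousLinearMap.adjoint Ep = Em ∘L ContinuousLinearMap.adjoint Em) :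
    IsUnit Ep ↔ IsUnit Em :=
  ⟨isUnit_aux Ep Em hmk hm0 h, isUnit_aux Em Ep hpk hp0 h.symm⟩
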